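/- There exists no monic hyperbolic polynomial of degree d with all coefficients nonzero realizing the sign pattern Σ_{d−1,1,1} (d−1 pluses, one minus, one final plus), i.e., with coefficients a_j > 0 for j ≥ 2, a_1 < 0, a_0 > 0, whose root moduli satisfy γ_1 ≤ β, where β is the smaller modulus of the two positive roots and γ_1 is the smallest modulus of a negative root. -/

import Mathlib

open Polynomial
open Finset

/-- There is no monic degree-`d` hyperbolic polynomial realizing the sign
pattern `Σ_{d-1,1,1}` (coefficients `a_j > 0` for `j ≥ 2`, `a_1 < 0`, `a_0 > 0`) whose
root moduli satisfy `γ₁ ≤ β`, where `β` is the smaller positive-root modulus and `γ₁`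
the smallest negative-root modulus. -/
theorem stmt8 (d : ℕ) (P : Polynomial ℝ)
    (hd : 3 ≤ d)
    (hmonic : P.Monic) (hdeg : P.natDegree = d)
    (hhyp : Multiset.card P.roots = d)
    (hsignhi : ∀ j, 2 ≤ j → j ≤ d → 0 < P.coeff j)
    (hsign1 : P.coeff 1 < 0)
    (hsign0 : 0 < P.coeff 0)
    (β : ℝ) (hβ : β ∈ P.roots) (hβpos : 0 < β)
    (hβmin : ∀ c ∈ P.roots, 0 < c → β ≤ c)
    (x : ℝ) (hx : x ∈ P.roots) (hxneg : x < 0) (hxβ : |x| ≤ β) :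
    False := by
  set y : ℝ := -x with hy_def
  have hy : 0 < y := by simp [hy_def]; linarith
  have hyβ : y ≤ β := by rwa [abs_of_neg hxneg] at hxβ
  have hevβ : P.eval β = 0 := isRoot_of_mem_roots hβ
  have hevx : P.eval x = 0 := isRoot_of_mem_roots hx
  have heval : ∀ t : ℝ, P.eval t = ∑ j ∈ range (d+1), P.coeff j * t^j := by
    intro t
    rw [Polynomial.eval_eq_sum_range, hdeg]
  set So := (range (d+1)).filter (fun j => Odd j) with hSo
  set Se := (range (d+1)).filter (fun j => ¬ Odd j) with hSe
  have hsplit : ∀ t : ℝ, (∑ j ∈ So, P.coeff j * t^j) + (∑ j ∈ Se, P.coeff j * t^j)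
      = ∑ j ∈ range (d+1), P.coeff j * t^j := by
    intro t
    exact Finset.sum_filter_add_sum_filter_not _ _ _
  -- Even part is positive at positive t
  have hEpos : ∀ t : ℝ, 0 < t → 0 < ∑ j ∈ Se, P.coeff j * t^j := by
    intro t ht
    apply Finset.sum_pos
    · intro j hj
      simp only [hSe, mem_filter, mem_range] at hj
      have hjd : j ≤ d := Nat.lt_succ_iff.mp hj.1
      have hc : 0 < P.coeff j := by
        rcases Nat.eq_zero_or_pos j with h0 | h1
        · simpa [h0] using hsign0
        · have h2 : 2 ≤ j := by
            rcases j with _ | _ | j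
            · omega
            · exact absurd ⟨0, rfl⟩ hj.2
            · omega
          exact hsignhi j h2 hjd
      exact mul_pos hc (pow_pos ht j)
    · exact ⟨0, by simp [hSe]⟩
  -- odd sums factor
  have hfact : ∀ t : ℝ, (∑ j ∈ So, P.coeff j * t^j)
      = (∑ j ∈ So, P.coeff j * t^(j-1)) * t := by
    intro t
    rw [Finset.sum_mul]
    apply Finset.sum_congr rfl
    intro j hj
    simp only [hSo, mem_filter] at hj
    have h1 : 1 ≤ j := hj.2.pos
    have : t^j = t^(j-1) * t := by
      conv_lhs => rw [← Nat.succ_pred_eq_of_pos h1]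
      rw [pow_succ]
      rfl
    rw [this]; ring
  -- monotonicity of the factored odd sum
  have hmono : (∑ j ∈ So, P.coeff j * y^(j-1)) ≤ (∑ j ∈ So, P.coeff j * β^(j-1)) := by
    apply Finset.sum_le_sum
    intro j hj
    simp only [hSo, mem_filter, mem_range] at hj
    rcases eq_or_lt_of_le (Nat.succ_le_of_lt hj.2.pos) with h1 | h1
    · rw [← h1]; simp
    · have h2 : 2 ≤ j := h1
      have hc : 0 ≤ P.coeff j := (hsignhi j h2 (Nat.lt_succ_iff.mp hj.1)).le
      exact mul_le_mul_of_nonneg_left (pow_le_pow_left₀ hy.le hyβ _) hc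
  -- evaluate at β
  have hβeq : (∑ j ∈ So, P.coeff j * β^j) + (∑ j ∈ Se, P.coeff j * β^j) = 0 := by
    rw [hsplit, ← heval, hevβ]
  -- evaluate at x = -y
  have hxeq : -(∑ j ∈ So, P.coeff j * y^j) + (∑ j ∈ Se, P.coeff j * y^j) = 0 := by
    have h1 : (∑ j ∈ So, P.coeff j * x^j) = -(∑ j ∈ So, P.coeff j * y^j) := by
      rw [← Finset.sum_neg_distrib]
      apply Finset.sum_congr rfl
      intro j hj
      simp only [hSo, mem_filter] at hj
      have : x = -y := by simp [hy_def]
      rw [this, hj.2.neg_pow]; ring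
    have h2 : (∑ j ∈ Se, P.coeff j * x^j) = (∑ j ∈ Se, P.coeff j * y^j) := by
      apply Finset.sum_congr rfl
      intro j hj
      simp only [hSe, mem_filter] at hj
      have hje : Even j := Nat.not_odd_iff_even.mp hj.2
      have : x = -y := by simp [hy_def]
      rw [this, hje.neg_pow]
    rw [← h1, ← h2, hsplit, ← heval, hevx]
  have hOy : 0 < ∑ j ∈ So, P.coeff j * y^j := by
    have := hEpos y hy; linarith
  have hOβ : (∑ j ∈ So, P.coeff j * β^j) < 0 := by
    have := hEpos β hβpos; linarith
  rw [hfact] at hOy hOβ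
  set u := ∑ j ∈ So, P.coeff j * y^(j-1)
  set v := ∑ j ∈ So, P.coeff j * β^(j-1)
  have hu : 0 < u := by
    by_contra h
    push_neg at h
    nlinarith
  have hv : v < 0 := by
    by_contra h
    push_neg at h
    nlinarith
  linarith
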